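/- Let R_+ be a positive subsystem of a Coxeter root system in R^N. Then for all x not on any reflection hyperplane, Σ_{β,γ ∈ R_+, β≠γ} (β,γ)/((β,x)(γ,x)) = 0. -/

import Mathlib

open Finset

noncomputable def dotp {N : ℕ} (u v : Fin N → ℝ) : ℝ := ∑ i, u i * v i

noncomputable def reflct {N : ℕ} (γ x : Fin N → ℝ) : Fin N → ℝ :=
  x - (2 * dotp γ x / dotp γ γ) • γ

namespace Aux

variable {N : ℕ}

lemma dotp_comm (u v : Fin N → ℝ) : dotp u v = dotp v u :=
  Finset.sum_congr rfl fun i _ => mul_comm _ _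

lemma dotp_add_right (u v w : Fin N → ℝ) : dotp u (v + w) = dotp u v + dotp u w := by
  unfold dotp
  rw [← Finset.sum_add_distrib]
  exact Finset.sum_congr rfl fun i _ => by simp [mul_add]

lemma dotp_smul_right (c : ℝ) (u v : Fin N → ℝ) : dotp u (c • v) = c * dotp u v := by
  unfold dotp
  rw [Finset.mul_sum]
  exact Finset.sum_congr rfl fun i _ => by simp; ring

lemma dotp_sub_right (u v w : Fin N → ℝ) : dotp u (v - w) = dotp u v - dotp u w := by
  unfold dotp
  rw [← Finset.sum_sub_distrib]
  exact Finset.sum_congr rfl fun i _ => by simp [mul_sub]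

lemma dotp_smul_left (c : ℝ) (u v : Fin N → ℝ) : dotp (c • u) v = c * dotp u v := by
  rw [dotp_comm, dotp_smul_right, dotp_comm]

lemma dotp_sub_left (u v w : Fin N → ℝ) : dotp (u - v) w = dotp u w - dotp v w := by
  rw [dotp_comm, dotp_sub_right, dotp_comm u w, dotp_comm v w]

lemma dotp_add_left (u v w : Fin N → ℝ) : dotp (u + v) w = dotp u w + dotp v w := by
  rw [dotp_comm, dotp_add_right, dotp_comm u w, dotp_comm v w]

lemma dotp_self_pos {v : Fin N → ℝ} (hv : v ≠ 0) : 0 < dotp v v := by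
  obtain ⟨i, hi⟩ : ∃ i, v i ≠ 0 := by
    by_contra h
    push_neg at h
    exact hv (funext h)
  exact Finset.sum_pos' (fun j _ => mul_self_nonneg _)
    ⟨i, Finset.mem_univ i, mul_self_pos.mpr hi⟩

lemma dotp_self_ne {v : Fin N → ℝ} (hv : v ≠ 0) : dotp v v ≠ 0 :=
  ne_of_gt (dotp_self_pos hv)

lemma dotp_reflct_right {γ : Fin N → ℝ} (hγ : γ ≠ 0) (v : Fin N → ℝ) :
    dotp γ (reflct γ v) = -dotp γ v := by
  unfold reflct
  rw [dotp_sub_right, dotp_smul_right]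
  field_simp [dotp_self_ne hγ]
  ring

lemma dotp_reflct_left_hyp {γ z : Fin N → ℝ} (hz : dotp γ z = 0) (v : Fin N → ℝ) :
    dotp (reflct γ v) z = dotp v z := by
  unfold reflct
  rw [dotp_sub_left, dotp_smul_left, hz]
  ring

lemma reflct_reflct {γ : Fin N → ℝ} (hγ : γ ≠ 0) (v : Fin N → ℝ) :
    reflct γ (reflct γ v) = v := by
  have h := dotp_reflct_right hγ v
  unfold reflct at h ⊢
  rw [h]
  have hne := dotp_self_ne hγ
  rw [sub_sub, ← add_smul]
  have : 2 * dotp γ v / dotp γ γ + 2 * -dotp γ v / dotp γ γ = 0 := by field_simp; ring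
  rw [this, zero_smul, sub_zero]

lemma reflct_smul (γ : Fin N → ℝ) (c : ℝ) (v : Fin N → ℝ) :
    reflct γ (c • v) = c • reflct γ v := by
  unfold reflct
  rw [dotp_smul_right, smul_sub, smul_smul]
  congr 2
  ring

lemma reflct_self {γ : Fin N → ℝ} (hγ : γ ≠ 0) : reflct γ γ = -γ := by
  unfold reflct
  have hne := dotp_self_ne hγ
  have h2 : 2 * dotp γ γ / dotp γ γ = 2 := by field_simp
  rw [h2, two_smul]
  abel

end Aux

namespace Aux2
open Aux

lemma even_card_of_invol {X : Type*} [DecidableEq X] (s : Finset X) (f : X → X)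
    (h1 : ∀ a ∈ s, f a ∈ s) (h2 : ∀ a ∈ s, f (f a) = a) (h3 : ∀ a ∈ s, f a ≠ a) :
    Even s.card := by
  induction s using Finset.strongInduction with
  | _ s ih =>
    rcases s.eq_empty_or_nonempty with rfl | ⟨a, ha⟩
    · simp
    · have hfa : f a ∈ s := h1 a ha
      have hfa' : f a ∈ s.erase a := Finset.mem_erase.2 ⟨h3 a ha, hfa⟩
      set t := (s.erase a).erase (f a) with ht
      have hsub : t ⊂ s := by
        refine Finset.ssubset_of_subset_of_ssubset ?_ (Finset.erase_ssubset ha)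
        exact Finset.erase_subset _ _
      have htmem : ∀ b ∈ t, b ∈ s := fun b hb =>
        Finset.mem_of_mem_erase (Finset.mem_of_mem_erase hb)
      have hft : ∀ b ∈ t, f b ∈ t := by
        intro b hb
        have hbs : b ∈ s := htmem b hb
        have hb1 : b ≠ f a := (Finset.mem_erase.1 hb).1
        have hb2 : b ≠ a := (Finset.mem_erase.1 (Finset.mem_of_mem_erase hb)).1
        refine Finset.mem_erase.2 ⟨?_, Finset.mem_erase.2 ⟨?_, h1 b hbs⟩⟩
        · intro h; exact hb2 (by rw [← h2 b hbs, h, h2 a ha])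
        · intro h; exact hb1 (by rw [← h2 b hbs, h])
      have heven := ih t hsub hft (fun b hb => h2 b (htmem b hb))
        (fun b hb => h3 b (htmem b hb))
      have hcard : s.card = t.card + 2 := by
        rw [ht, Finset.card_erase_of_mem hfa', Finset.card_erase_of_mem ha]
        have : 2 ≤ s.card := Finset.one_lt_card.2 ⟨a, ha, f a, hfa, (h3 a ha).symm⟩
        omega
      rw [hcard]
      exact heven.add (Even.add_self 1)

variable {N : ℕ}

lemma F_hyperplane [DecidableEq (Fin N → ℝ)]
    (R Rplus : Finset (Fin N → ℝ))
    (hnz : ∀ γ ∈ R, γ ≠ 0)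
    (hrefl : ∀ γ ∈ R, ∀ β ∈ R, reflct γ β ∈ R)
    (hpos : ∀ γ, γ ∈ R ↔ (γ ∈ Rplus ∨ -γ ∈ Rplus))
    (hdisj : ∀ γ ∈ Rplus, -γ ∉ Rplus)
    (hnocol : ∀ γ ∈ Rplus, ∀ β ∈ Rplus, ∀ t : ℝ, β = t • γ → β = γ)
    {β : Fin N → ℝ} (hβ : β ∈ Rplus) {z : Fin N → ℝ} (hz : dotp β z = 0) :
    ∑ b ∈ Rplus, ∑ c ∈ Rplus.erase b,
      dotp b c * ∏ α ∈ (Rplus.erase b).erase c, dotp α z = 0 := by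
  classical
  have hRp : ∀ γ ∈ Rplus, γ ∈ R := fun γ h => (hpos γ).2 (Or.inl h)
  have hβR : β ∈ R := hRp β hβ
  have hβ0 : β ≠ 0 := hnz β hβR
  set E := Rplus.erase β with hE
  set σ : (Fin N → ℝ) → (Fin N → ℝ) := fun α => reflct β α with hσ
  set ε : (Fin N → ℝ) → ℝ := fun α => if reflct β α ∈ Rplus then 1 else -1 with hε
  set φ : (Fin N → ℝ) → (Fin N → ℝ) := fun α => ε α • reflct β α with hφ
  have hσσ : ∀ v, reflct β (reflct β v) = v := reflct_reflct hβ0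
  have hσβ : reflct β β = -β := reflct_self hβ0
  have hε2 : ∀ α, ε α * ε α = 1 := by
    intro α; rw [hε]; dsimp only; split <;> norm_num
  have hεcases : ∀ α, ε α = 1 ∨ ε α = -1 := by
    intro α; rw [hε]; dsimp only; split
    · exact Or.inl rfl
    · exact Or.inr rfl
  have hφRp : ∀ α ∈ Rplus, φ α ∈ Rplus := by
    intro α hα
    have hσR : reflct β α ∈ R := hrefl β hβR α (hRp α hα)
    rw [hφ]; dsimp only; rw [hε]; dsimp only
    by_cases hc : reflct β α ∈ Rplus
    · simpa [hc] using hc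
    · have : -(reflct β α) ∈ Rplus := ((hpos _).1 hσR).resolve_left hc
      simpa [hc] using this
  have hφβ : ∀ α ∈ E, φ α ≠ β := by
    intro α hα h
    have hαp : α ∈ Rplus := Finset.mem_of_mem_erase hα
    have hαβ : α ≠ β := (Finset.mem_erase.1 hα).1
    have hσα : reflct β α = ε α • β := by
      have h0 := congrArg (fun v => ε α • v) h
      rw [hφ] at h0; dsimp only at h0
      rw [smul_smul, hε2, one_smul] at h0
      exact h0
    have h5 := congrArg (reflct β) hσα
    rw [hσσ, reflct_smul, hσβ] at h5
    rcases hεcases α with h1 | h1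
    · rw [h1, one_smul] at h5
      rw [h5] at hαp
      exact hdisj β hβ hαp
    · rw [h1] at h5
      simp at h5
      exact hαβ h5
  have hφE : ∀ α ∈ E, φ α ∈ E := fun α hα =>
    Finset.mem_erase.2 ⟨hφβ α hα, hφRp α (Finset.mem_of_mem_erase hα)⟩
  have hσφ : ∀ α, reflct β (φ α) = ε α • α := by
    intro α
    rw [hφ]; dsimp only
    rw [reflct_smul, hσσ]
  have hφφ : ∀ α ∈ Rplus, φ (φ α) = α := by
    intro α hα
    have h1 : φ (φ α) = ε (φ α) • (ε α • α) := by
      conv_lhs => rw [hφ]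
      dsimp only
      rw [hσφ]
    by_cases hc : reflct β α ∈ Rplus
    · have hεα : ε α = 1 := by rw [hε]; simp [hc]
      have h2 : ε (φ α) = 1 := by
        rw [hε]; dsimp only
        rw [hσφ, hεα, one_smul]
        simp [hα]
      rw [h1, h2, hεα, one_smul, one_smul]
    · have hεα : ε α = -1 := by rw [hε]; simp [hc]
      have h2 : ε (φ α) = -1 := by
        rw [hε]; dsimp only
        rw [hσφ, hεα]
        have h3 : (-1 : ℝ) • α = -α := by simp
        rw [h3]
        simp [hdisj α hα]
      rw [h1, h2, hεα]
      simp
  have hφinj : ∀ a ∈ E, ∀ b ∈ E, φ a = φ b → a = b := by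
    intro a ha b hb h
    have h0 := congrArg φ h
    rw [hφφ a (Finset.mem_of_mem_erase ha), hφφ b (Finset.mem_of_mem_erase hb)] at h0
    exact h0
  have hdφz : ∀ α, dotp (φ α) z = ε α * dotp α z := by
    intro α
    rw [hφ]; dsimp only
    rw [dotp_smul_left, dotp_reflct_left_hyp hz]
  have hdβφ : ∀ γ, dotp β (φ γ) = -(ε γ) * dotp β γ := by
    intro γ
    rw [hφ]; dsimp only
    rw [dotp_smul_right, dotp_reflct_right hβ0]
    ring
  -- product of signs is 1
  have hprodε : ∏ α ∈ E, ε α = 1 := by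
    rw [← Finset.prod_filter_mul_prod_filter_not E (fun α => reflct β α ∈ Rplus) ε]
    have h1 : ∏ α ∈ E.filter (fun α => reflct β α ∈ Rplus), ε α = 1 := by
      apply Finset.prod_eq_one
      intro α hα
      rw [hε]; simp [(Finset.mem_filter.1 hα).2]
    have h2 : ∏ α ∈ E.filter (fun α => ¬ reflct β α ∈ Rplus), ε α
        = (-1 : ℝ) ^ (E.filter (fun α => ¬ reflct β α ∈ Rplus)).card := by
      rw [Finset.prod_congr rfl (fun α hα => by
        rw [hε]; simp [(Finset.mem_filter.1 hα).2] : ∀ α ∈ _, ε α = -1)]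
      rw [Finset.prod_const]
    have heven : Even (E.filter (fun α => ¬ reflct β α ∈ Rplus)).card := by
      apply even_card_of_invol _ (fun α => -(reflct β α))
      · intro a ha
        obtain ⟨haE, haσ⟩ := Finset.mem_filter.1 ha
        have hap : a ∈ Rplus := Finset.mem_of_mem_erase haE
        have haR : reflct β a ∈ R := hrefl β hβR a (hRp a hap)
        have hmem : -(reflct β a) ∈ Rplus := ((hpos _).1 haR).resolve_left haσ
        have hrw : reflct β (-(reflct β a)) = -a := by
          have h4 : (-(reflct β a) : Fin N → ℝ) = (-1 : ℝ) • reflct β a := by simp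
          rw [h4, reflct_smul, hσσ]; simp
        have hne : -(reflct β a) ≠ β := by
          intro h
          have h6 := congrArg (reflct β) h
          rw [hrw, hσβ] at h6
          have h7 : a = β := by
            have := congrArg Neg.neg h6
            simpa using this
          exact (Finset.mem_erase.1 haE).1 h7
        refine Finset.mem_filter.2 ⟨Finset.mem_erase.2 ⟨hne, hmem⟩, ?_⟩
        rw [hrw]
        exact hdisj a hap
      · intro a _
        have h4 : (-(reflct β a) : Fin N → ℝ) = (-1 : ℝ) • reflct β a := by simp
        rw [h4, reflct_smul, hσσ]; simp
      · intro a ha h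
        obtain ⟨haE, haσ⟩ := Finset.mem_filter.1 ha
        have hap : a ∈ Rplus := Finset.mem_of_mem_erase haE
        have hσa : reflct β a = -a := neg_eq_iff_eq_neg.mp h
        have hu : a - (2 * dotp β a / dotp β β) • β = -a := hσa
        have h2a : (2:ℝ) • a = (2 * dotp β a / dotp β β) • β := by
          linear_combination (norm := module) hu
        have h3a : a = (dotp β a / dotp β β) • β := by
          calc a = (2⁻¹ : ℝ) • ((2:ℝ) • a) := by
                rw [smul_smul]; norm_num
          _ = (2⁻¹ : ℝ) • ((2 * dotp β a / dotp β β) • β) := by rw [h2a]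
          _ = (dotp β a / dotp β β) • β := by rw [smul_smul]; congr 1; ring
        have := hnocol β hβ a hap _ h3a
        exact (Finset.mem_erase.1 haE).1 this
    rw [h1, h2, one_mul, heven.neg_one_pow]
  have hprodεerase : ∀ γ ∈ E, ∏ α ∈ E.erase γ, ε α = ε γ := by
    intro γ hγ
    have h := Finset.mul_prod_erase E ε hγ
    rw [hprodε] at h
    have h0 := congrArg (fun r => ε γ * r) h
    rw [← mul_assoc, hε2, one_mul, mul_one] at h0
    exact h0
  -- the core sum G vanishes
  set G := ∑ γ ∈ E, dotp β γ * ∏ α ∈ E.erase γ, dotp α z with hG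
  have hGzero : G = 0 := by
    have hre : G = ∑ γ ∈ E, dotp β (φ γ) * ∏ α ∈ E.erase (φ γ), dotp α z := by
      rw [hG]
      refine Finset.sum_nbij' φ φ hφE hφE
        (fun a ha => hφφ a (Finset.mem_of_mem_erase ha))
        (fun a ha => hφφ a (Finset.mem_of_mem_erase ha))
        (fun a ha => ?_)
      rw [hφφ a (Finset.mem_of_mem_erase ha)]
    have hterm : ∀ γ ∈ E, dotp β (φ γ) * ∏ α ∈ E.erase (φ γ), dotp α z
        = -(dotp β γ * ∏ α ∈ E.erase γ, dotp α z) := by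
      intro γ hγ
      have hp1 : ∏ α ∈ E.erase (φ γ), dotp α z
          = ∏ α ∈ E.erase γ, (ε α * dotp α z) := by
        refine (Finset.prod_nbij' φ φ ?_ ?_ ?_ ?_ ?_).symm
        · intro a ha
          obtain ⟨haγ, haE⟩ := Finset.mem_erase.1 ha
          refine Finset.mem_erase.2 ⟨?_, hφE a haE⟩
          intro hc
          exact haγ (hφinj a haE γ hγ hc)
        · intro b hb
          obtain ⟨hbφγ, hbE⟩ := Finset.mem_erase.1 hb
          refine Finset.mem_erase.2 ⟨?_, hφE b hbE⟩
          intro hc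
          apply hbφγ
          rw [← hc, hφφ b (Finset.mem_of_mem_erase hbE)]
        · intro a ha
          exact hφφ a (Finset.mem_of_mem_erase (Finset.mem_of_mem_erase ha))
        · intro a ha
          exact hφφ a (Finset.mem_of_mem_erase (Finset.mem_of_mem_erase ha))
        · intro a _
          exact (hdφz a).symm
      rw [hp1, Finset.prod_mul_distrib, hprodεerase γ hγ, hdβφ γ]
      linear_combination (-(dotp β γ * ∏ α ∈ E.erase γ, dotp α z)) * hε2 γ
    have hGneg : G = -G := by
      calc G = ∑ γ ∈ E, dotp β (φ γ) * ∏ α ∈ E.erase (φ γ), dotp α z := hre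
      _ = ∑ γ ∈ E, -(dotp β γ * ∏ α ∈ E.erase γ, dotp α z) := Finset.sum_congr rfl hterm
      _ = -G := by rw [Finset.sum_neg_distrib, hG]
    linarith
  -- assembling: the full double sum equals 2 * G
  have hsplit : ∀ b ∈ E, (∑ c ∈ Rplus.erase b,
      dotp b c * ∏ α ∈ (Rplus.erase b).erase c, dotp α z)
      = dotp β b * ∏ α ∈ E.erase b, dotp α z := by
    intro b hb
    have hbβ : b ≠ β := (Finset.mem_erase.1 hb).1
    have hbp : b ∈ Rplus := Finset.mem_of_mem_erase hb
    have hβb : β ∈ Rplus.erase b := Finset.mem_erase.2 ⟨Ne.symm hbβ, hβ⟩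
    rw [← Finset.add_sum_erase _ _ hβb]
    have hzero : ∑ c ∈ (Rplus.erase b).erase β,
        dotp b c * ∏ α ∈ (Rplus.erase b).erase c, dotp α z = 0 := by
      apply Finset.sum_eq_zero
      intro c hc
      have hcβ : c ≠ β := (Finset.mem_erase.1 hc).1
      have hcb : c ≠ b := (Finset.mem_erase.1 (Finset.mem_of_mem_erase hc)).1
      have hβmem : β ∈ (Rplus.erase b).erase c :=
        Finset.mem_erase.2 ⟨Ne.symm hcβ, Finset.mem_erase.2 ⟨Ne.symm hbβ, hβ⟩⟩
      rw [Finset.prod_eq_zero hβmem hz, mul_zero]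
    rw [hzero, add_zero, dotp_comm b β]
    congr 1
    rw [hE, Finset.erase_right_comm]
  calc ∑ b ∈ Rplus, ∑ c ∈ Rplus.erase b,
      dotp b c * ∏ α ∈ (Rplus.erase b).erase c, dotp α z
      = (∑ c ∈ Rplus.erase β, dotp β c * ∏ α ∈ (Rplus.erase β).erase c, dotp α z)
        + ∑ b ∈ E, ∑ c ∈ Rplus.erase b,
          dotp b c * ∏ α ∈ (Rplus.erase b).erase c, dotp α z := by
        exact (Finset.add_sum_erase _ _ hβ).symm
  _ = G + G := by
        rw [Finset.sum_congr rfl hsplit]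
  _ = 0 := by rw [hGzero]; ring

end Aux2

/-- For a positive subsystem `Rplus` of a Coxeter root system `R` in `ℝ^N`, and any
`x` off all reflection hyperplanes, `Σ_{β,γ ∈ R_+, β≠γ} (β,γ)/((β,x)(γ,x)) = 0`. -/
theorem stmt2 {N : ℕ} [DecidableEq (Fin N → ℝ)]
    (R Rplus : Finset (Fin N → ℝ))
    (hnz : ∀ γ ∈ R, γ ≠ 0)
    (hrefl : ∀ γ ∈ R, ∀ β ∈ R, reflct γ β ∈ R)
    (hpos : ∀ γ, γ ∈ R ↔ (γ ∈ Rplus ∨ -γ ∈ Rplus))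
    (hdisj : ∀ γ ∈ Rplus, -γ ∉ Rplus)
    (hnocol : ∀ γ ∈ Rplus, ∀ β ∈ Rplus, ∀ t : ℝ, β = t • γ → β = γ)
    (x : Fin N → ℝ) (hx : ∀ γ ∈ Rplus, dotp γ x ≠ 0) :
    ∑ β ∈ Rplus, ∑ γ ∈ Rplus.erase β, dotp β γ / (dotp β x * dotp γ x) = 0 := by
  classical
  open Aux Aux2 Polynomial in
  by_cases hsmall : Rplus.card ≤ 1
  · apply Finset.sum_eq_zero
    intro β hβ
    have h0 : Rplus.erase β = ∅ := by
      rw [← Finset.card_eq_zero, Finset.card_erase_of_mem hβ]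
      omega
    rw [h0, Finset.sum_empty]
  push_neg at hsmall
  -- an auxiliary polynomial recording a coefficient vector
  set Q : (Fin N → ℝ) → Polynomial ℝ := fun v => ∑ i : Fin N, Polynomial.monomial (i : ℕ) (v i)
    with hQ
  have hQeval : ∀ (v : Fin N → ℝ) (s : ℝ), (Q v).eval s = dotp v (fun i => s ^ (i : ℕ)) := by
    intro v s
    rw [hQ]; dsimp only
    rw [Polynomial.eval_finset_sum]
    unfold dotp
    exact Finset.sum_congr rfl fun i _ => by rw [Polynomial.eval_monomial]
  have hQne : ∀ v : Fin N → ℝ, v ≠ 0 → Q v ≠ 0 := by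
    intro v hv h
    obtain ⟨j, hj⟩ : ∃ j, v j ≠ 0 := by
      by_contra hc; push_neg at hc; exact hv (funext hc)
    apply hj
    have h2 := congrArg (fun p => Polynomial.coeff p (j : ℕ)) h
    rw [hQ] at h2; dsimp only at h2
    rw [Polynomial.finset_sum_coeff] at h2
    simpa [Polynomial.coeff_monomial, Fin.val_eq_val] using h2
  -- choose a generic direction y
  set bad : Finset ℝ :=
    (Rplus.biUnion fun α => (Q α).roots.toFinset) ∪
    (Rplus.biUnion fun α => (Rplus.erase α).biUnion fun γ =>
      (Q ((dotp α x) • γ - (dotp γ x) • α)).roots.toFinset) with hbad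
  obtain ⟨s, hs⟩ := Infinite.exists_notMem_finset bad
  set y : Fin N → ℝ := fun i => s ^ (i : ℕ) with hy
  have hy1 : ∀ α ∈ Rplus, dotp α y ≠ 0 := by
    intro α hα h
    have hαR : α ∈ R := (hpos α).2 (Or.inl hα)
    have hQα : Q α ≠ 0 := hQne α (hnz α hαR)
    apply hs
    rw [hbad]
    apply Finset.mem_union_left
    refine Finset.mem_biUnion.2 ⟨α, hα, ?_⟩
    rw [Multiset.mem_toFinset, Polynomial.mem_roots hQα]
    rw [Polynomial.IsRoot, hQeval]
    exact h
  have hy2 : ∀ α ∈ Rplus, ∀ γ ∈ Rplus.erase α,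
      dotp α x * dotp γ y - dotp γ x * dotp α y ≠ 0 := by
    intro α hα γ hγ h
    set w := (dotp α x) • γ - (dotp γ x) • α with hw
    have hwz : w ≠ 0 := by
      intro hw0
      have he : (dotp α x) • γ = (dotp γ x) • α := by
        rw [hw] at hw0
        rwa [sub_eq_zero] at hw0
      have hax := hx α hα
      have hγval : γ = (dotp γ x / dotp α x) • α := by
        calc γ = (dotp α x)⁻¹ • ((dotp α x) • γ) := by
              rw [smul_smul, inv_mul_cancel₀ hax, one_smul]
        _ = (dotp α x)⁻¹ • ((dotp γ x) • α) := by rw [he]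
        _ = (dotp γ x / dotp α x) • α := by rw [smul_smul]; congr 1; ring
      have := hnocol α hα γ (Finset.mem_of_mem_erase hγ) _ hγval
      exact (Finset.mem_erase.1 hγ).1 this
    apply hs
    rw [hbad]
    apply Finset.mem_union_right
    refine Finset.mem_biUnion.2 ⟨α, hα, Finset.mem_biUnion.2 ⟨γ, hγ, ?_⟩⟩
    rw [Multiset.mem_toFinset, Polynomial.mem_roots (hQne w hwz)]
    rw [Polynomial.IsRoot, hQeval]
    rw [hw, dotp_sub_left, dotp_smul_left, dotp_smul_left]
    exact h
  set t : (Fin N → ℝ) → ℝ := fun α => -(dotp α x) / (dotp α y) with ht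
  have htinj : ∀ α ∈ Rplus, ∀ γ ∈ Rplus, t α = t γ → α = γ := by
    intro α hα γ hγ h
    by_contra hne
    have hγe : γ ∈ Rplus.erase α := Finset.mem_erase.2 ⟨fun hc => hne hc.symm, hγ⟩
    apply hy2 α hα γ hγe
    rw [ht] at h; dsimp only at h
    rw [div_eq_div_iff (hy1 α hα) (hy1 γ hγ)] at h
    linarith
  -- the polynomial p(r) = F(x + r y)
  set p : Polynomial ℝ := ∑ β ∈ Rplus, ∑ γ ∈ Rplus.erase β, Polynomial.C (dotp β γ) *
      ∏ α ∈ (Rplus.erase β).erase γ,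
        (Polynomial.C (dotp α x) + Polynomial.C (dotp α y) * Polynomial.X) with hp
  have hpeval : ∀ r : ℝ, p.eval r = ∑ β ∈ Rplus, ∑ γ ∈ Rplus.erase β,
      dotp β γ * ∏ α ∈ (Rplus.erase β).erase γ, dotp α (x + r • y) := by
    intro r
    rw [hp, Polynomial.eval_finset_sum]
    refine Finset.sum_congr rfl fun β _ => ?_
    rw [Polynomial.eval_finset_sum]
    refine Finset.sum_congr rfl fun γ _ => ?_
    rw [Polynomial.eval_mul, Polynomial.eval_C, Polynomial.eval_prod]
    congr 1
    refine Finset.prod_congr rfl fun α _ => ?_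
    rw [Polynomial.eval_add, Polynomial.eval_mul, Polynomial.eval_C, Polynomial.eval_C,
      Polynomial.eval_X, dotp_add_right, dotp_smul_right]
    ring
  have hdeg : p.natDegree < Rplus.card := by
    have h2 : p.natDegree ≤ Rplus.card - 2 := by
      rw [hp]
      apply Polynomial.natDegree_sum_le_of_forall_le
      intro β hβ
      apply Polynomial.natDegree_sum_le_of_forall_le
      intro γ hγ
      refine le_trans (Polynomial.natDegree_mul_le) ?_
      rw [Polynomial.natDegree_C, zero_add]
      refine le_trans (Polynomial.natDegree_prod_le _ _) ?_
      have hcard : ((Rplus.erase β).erase γ).card = Rplus.card - 2 := by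
        rw [Finset.card_erase_of_mem hγ, Finset.card_erase_of_mem hβ]
        omega
      have hone : ∀ α ∈ (Rplus.erase β).erase γ,
          (Polynomial.C (dotp α x) + Polynomial.C (dotp α y) * Polynomial.X).natDegree ≤ 1 := by
        intro α _
        refine le_trans (Polynomial.natDegree_add_le _ _) ?_
        rw [Polynomial.natDegree_C]
        refine max_le (by omega) ?_
        refine le_trans (Polynomial.natDegree_mul_le) ?_
        rw [Polynomial.natDegree_C, Polynomial.natDegree_X]
      refine le_trans (Finset.sum_le_card_nsmul _ _ 1 hone) ?_
      rw [smul_eq_mul, mul_one, hcard]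
    omega
  have hproot : ∀ α ∈ Rplus, p.eval (t α) = 0 := by
    intro α hα
    rw [hpeval]
    apply Aux2.F_hyperplane R Rplus hnz hrefl hpos hdisj hnocol hα
    rw [dotp_add_right, dotp_smul_right, ht]
    dsimp only
    rw [div_mul_cancel₀ _ (hy1 α hα)]
    ring
  have hp0 : p = 0 := by
    apply Polynomial.eq_zero_of_natDegree_lt_card_of_eval_eq_zero' p (Rplus.image t)
    · intro i hi
      obtain ⟨α, hα, rfl⟩ := Finset.mem_image.1 hi
      exact hproot α hα
    · rwa [Finset.card_image_of_injOn (fun a ha b hb => htinj a ha b hb)]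
  have hFx : ∑ β ∈ Rplus, ∑ γ ∈ Rplus.erase β,
      dotp β γ * ∏ α ∈ (Rplus.erase β).erase γ, dotp α x = 0 := by
    have h0 := hpeval 0
    rw [hp0] at h0
    have hxy : x + (0:ℝ) • y = x := by rw [zero_smul, add_zero]
    rw [hxy] at h0
    simpa using h0.symm
  have hmul : (∑ β ∈ Rplus, ∑ γ ∈ Rplus.erase β, dotp β γ / (dotp β x * dotp γ x))
      * ∏ α ∈ Rplus, dotp α x
      = ∑ β ∈ Rplus, ∑ γ ∈ Rplus.erase β,
          dotp β γ * ∏ α ∈ (Rplus.erase β).erase γ, dotp α x := by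
    rw [Finset.sum_mul]
    refine Finset.sum_congr rfl fun β hβ => ?_
    rw [Finset.sum_mul]
    refine Finset.sum_congr rfl fun γ hγ => ?_
    have h1 : ∏ α ∈ Rplus, dotp α x
        = dotp β x * (dotp γ x * ∏ α ∈ (Rplus.erase β).erase γ, dotp α x) := by
      rw [← Finset.mul_prod_erase Rplus _ hβ, ← Finset.mul_prod_erase (Rplus.erase β) _ hγ]
    rw [h1]
    have hβx := hx β hβ
    have hγx := hx γ (Finset.mem_of_mem_erase hγ)
    field_simp
  have hprodne : (∏ α ∈ Rplus, dotp α x) ≠ 0 :=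
    Finset.prod_ne_zero_iff.2 (fun α hα => hx α hα)
  have hfin := hmul.trans hFx
  exact (mul_eq_zero.1 hfin).resolve_right hprodne
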